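/- (Justification of the occupancy-matching objective, Eq. 3.) In a finite Dec-POMDP with hierarchical agent models, let f : ℝ → ℝ satisfy f(1) = 0 and f(u) > 0 for every u ≠ 1. Let N_E = (π_{E,i}, Tx_{E,i})_{i=1..n} be an expert joint model whose AMM-occupancy measures ρ_{E,i} are strictly positive: ρ_{E,i}(o,a,x,x⁻) > 0 for all i and all arguments. For any joint model N = (π_i, Tx_i)_{i=1..n} with AMM-occupancy measures ρ_i, the objective ∑_{i=1}^n ∑_{o,a,x,x⁻} ρ_{E,i}(o,a,x,x⁻) · f( ρ_i(o,a,x,x⁻) / ρ_{E,i}(o,a,x,x⁻) ) is nonnegative, and it equals 0 if and only if ρ_i = ρ_{E,i} for all i, which in turn holds if and only if π_i = π_{E,i} and Tx_i = Tx_{E,i} for all i. -/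
import Mathlib


open scoped BigOperators
open Classical

section DecPOMDP

variable {n : ℕ} {S : Type} {A : Fin n → Type} {Ω : Fin n → Type} {X : Fin n → Type}

/-- The time-`t` joint distribution of the Dec-POMDP process with hierarchical agent
models, over tuples `(s^t, o^t, x^{t-1}, x^t, a^t)`; here `x^{-1} := #` is modelled by
`none`, as is the absent previous joint action at time `0`. The process is:
`s⁰ ~ μ0`, `o_i⁰ = O_i(s⁰,#)`, `x_i⁰ ~ Tx_i(·|o_i⁰,#)`, `a_i⁰ ~ π_i(·|o_i⁰,x_i⁰)`;
and for `t ≥ 0`, `s^{t+1} ~ T(·|s^t,a^t)`, `o_i^{t+1} = O_i(s^{t+1},a^t)`,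
`x_i^{t+1} ~ Tx_i(·|o_i^{t+1},x_i^t)`, `a_i^{t+1} ~ π_i(·|o_i^{t+1},x_i^{t+1})`,
independently across agents. -/
noncomputable def jointDist [Fintype S] [∀ i, Fintype (A i)] [∀ i, Fintype (Ω i)]
    [∀ i, Fintype (X i)]
    (T : S → (∀ i, A i) → S → ℝ) (μ0 : S → ℝ)
    (Obs : ∀ i, S → Option (∀ j, A j) → Ω i)
    (π : ∀ i, Ω i → X i → A i → ℝ)
    (Tx : ∀ i, Ω i → Option (X i) → X i → ℝ) :
    ℕ → S → (∀ i, Ω i) → (∀ i, Option (X i)) → (∀ i, X i) → (∀ i, A i) → ℝ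
  | 0, s, o, xp, x, a =>
      (μ0 s *
        (if (∀ i, o i = Obs i s none) ∧ xp = (fun _ => none) then (1 : ℝ) else 0)) *
      ((∏ i, Tx i (o i) (xp i) (x i)) * ∏ i, π i (o i) (x i) (a i))
  | (t + 1), s', o', xp', x', a' =>
      (∑ s : S, ∑ o : (∀ i, Ω i), ∑ xp : (∀ i, Option (X i)), ∑ x : (∀ i, X i),
        ∑ a : (∀ i, A i),
          jointDist T μ0 Obs π Tx t s o xp x a * T s a s' *
            (if (∀ i, o' i = Obs i s' (some a)) ∧ xp' = (fun i => some (x i))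
              then (1 : ℝ) else 0)) *
      ((∏ i, Tx i (o' i) (xp' i) (x' i)) * ∏ i, π i (o' i) (x' i) (a' i))

/-- The AMM-occupancy measure of agent `i`:
`ρ_i(o,a,x,x⁻) := ∑_{t=0}^∞ γ^t · P(o_i^t = o, a_i^t = a, x_i^t = x, x_i^{t-1} = x⁻)`,
with the convention `x_i^{-1} := #` (modelled by `none`). -/
noncomputable def occAMM [Fintype S] [∀ i, Fintype (A i)] [∀ i, Fintype (Ω i)]
    [∀ i, Fintype (X i)]
    (T : S → (∀ i, A i) → S → ℝ) (μ0 : S → ℝ)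
    (Obs : ∀ i, S → Option (∀ j, A j) → Ω i) (γ : ℝ)
    (π : ∀ i, Ω i → X i → A i → ℝ)
    (Tx : ∀ i, Ω i → Option (X i) → X i → ℝ)
    (i : Fin n) (o : Ω i) (a : A i) (x : X i) (xp : Option (X i)) : ℝ :=
  ∑' t : ℕ,
    γ ^ t *
      (∑ s : S, ∑ oj : (∀ j, Ω j), ∑ xpj : (∀ j, Option (X j)), ∑ xj : (∀ j, X j),
        ∑ aj : (∀ j, A j),
          if oj i = o ∧ aj i = a ∧ xj i = x ∧ xpj i = xp
            then jointDist T μ0 Obs π Tx t s oj xpj xj aj else 0)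


lemma sum_pi_ite {ι : Type*} [Fintype ι] [DecidableEq ι] {Y : ι → Type*}
    [∀ j, Fintype (Y j)] (F : ∀ j, Y j → ℝ) (i : ι) (x : Y i)
    (hsum : ∀ j, ∑ y, F j y = 1) :
    (∑ g : ∀ j, Y j, if g i = x then ∏ j, F j (g j) else 0) = F i x := by
  have h1 : ∀ g : ∀ j, Y j,
      (if g i = x then ∏ j, F j (g j) else 0) =
      ∏ j, Function.update F i (fun y => if y = x then F i y else 0) j (g j) := by
    intro g
    by_cases hg : g i = x
    · rw [if_pos hg]
      refine Finset.prod_congr rfl fun j _ => ?_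
      rcases eq_or_ne j i with rfl | hj
      · simp [Function.update_self, hg]
      · simp [Function.update_of_ne hj]
    · rw [if_neg hg]
      symm
      refine Finset.prod_eq_zero (Finset.mem_univ i) ?_
      simp [Function.update_self, hg]
  rw [Finset.sum_congr rfl fun g _ => h1 g]
  rw [← Fintype.piFinset_univ, ← Finset.prod_univ_sum]
  rw [Fintype.prod_eq_single i (fun j hj => by
    simp [Function.update_of_ne hj, hsum j])]
  simp [Function.update_self]

/-- The `(s, o, xp)`-dependent prefix of `jointDist`. -/
noncomputable def baseDist [Fintype S] [∀ i, Fintype (A i)] [∀ i, Fintype (Ω i)]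
    [∀ i, Fintype (X i)]
    (T : S → (∀ i, A i) → S → ℝ) (μ0 : S → ℝ)
    (Obs : ∀ i, S → Option (∀ j, A j) → Ω i)
    (π : ∀ i, Ω i → X i → A i → ℝ)
    (Tx : ∀ i, Ω i → Option (X i) → X i → ℝ) :
    ℕ → S → (∀ i, Ω i) → (∀ i, Option (X i)) → ℝ
  | 0, s, o, xp =>
      μ0 s * (if (∀ i, o i = Obs i s none) ∧ xp = (fun _ => none) then (1 : ℝ) else 0)
  | (t + 1), s', o', xp' =>
      ∑ s : S, ∑ o : (∀ i, Ω i), ∑ xp : (∀ i, Option (X i)), ∑ x : (∀ i, X i),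
        ∑ a : (∀ i, A i),
          jointDist T μ0 Obs π Tx t s o xp x a * T s a s' *
            (if (∀ i, o' i = Obs i s' (some a)) ∧ xp' = (fun i => some (x i))
              then (1 : ℝ) else 0)

lemma jointDist_eq_base [Fintype S] [∀ i, Fintype (A i)] [∀ i, Fintype (Ω i)]
    [∀ i, Fintype (X i)]
    (T : S → (∀ i, A i) → S → ℝ) (μ0 : S → ℝ)
    (Obs : ∀ i, S → Option (∀ j, A j) → Ω i)
    (π : ∀ i, Ω i → X i → A i → ℝ)
    (Tx : ∀ i, Ω i → Option (X i) → X i → ℝ)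
    (t : ℕ) (s : S) (o : ∀ i, Ω i) (xp : ∀ i, Option (X i)) (x : ∀ i, X i)
    (a : ∀ i, A i) :
    jointDist T μ0 Obs π Tx t s o xp x a =
      baseDist T μ0 Obs π Tx t s o xp *
        ((∏ i, Tx i (o i) (xp i) (x i)) * ∏ i, π i (o i) (x i) (a i)) := by
  cases t <;> rfl
lemma jointDist_marginal [Fintype S] [∀ i, Fintype (A i)] [∀ i, Fintype (Ω i)]
    [∀ i, Fintype (X i)]
    (T : S → (∀ i, A i) → S → ℝ) (μ0 : S → ℝ)
    (Obs : ∀ i, S → Option (∀ j, A j) → Ω i)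
    (π : ∀ i, Ω i → X i → A i → ℝ)
    (Tx : ∀ i, Ω i → Option (X i) → X i → ℝ)
    (hπ_sum : ∀ i o x, ∑ a : A i, π i o x a = 1)
    (hTx_sum : ∀ i o xp, ∑ x : X i, Tx i o xp x = 1)
    (i : Fin n) (o : Ω i) (a : A i) (x : X i) (xp : Option (X i)) (t : ℕ) :
    (∑ s : S, ∑ oj : (∀ j, Ω j), ∑ xpj : (∀ j, Option (X j)), ∑ xj : (∀ j, X j),
        ∑ aj : (∀ j, A j),
          if oj i = o ∧ aj i = a ∧ xj i = x ∧ xpj i = xp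
            then jointDist T μ0 Obs π Tx t s oj xpj xj aj else 0)
    = Tx i o xp x * π i o x a *
      (∑ s : S, ∑ oj : (∀ j, Ω j), ∑ xpj : (∀ j, Option (X j)),
        if oj i = o ∧ xpj i = xp then baseDist T μ0 Obs π Tx t s oj xpj else 0) := by
  rw [Finset.mul_sum]
  refine Finset.sum_congr rfl fun s _ => ?_
  rw [Finset.mul_sum]
  refine Finset.sum_congr rfl fun oj _ => ?_
  rw [Finset.mul_sum]
  refine Finset.sum_congr rfl fun xpj _ => ?_
  by_cases h : oj i = o ∧ xpj i = xp
  · obtain ⟨ho, hxp⟩ := h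
    subst ho hxp
    simp only [eq_self_iff_true, true_and, and_true, if_true]
    have step1 : ∀ xj : ∀ j, X j,
        (∑ aj : ∀ j, A j, if aj i = a ∧ xj i = x
            then jointDist T μ0 Obs π Tx t s oj xpj xj aj else 0)
        = if xj i = x then
            baseDist T μ0 Obs π Tx t s oj xpj *
              (∏ j, Tx j (oj j) (xpj j) (xj j)) * π i (oj i) (xj i) a
          else 0 := by
      intro xj
      by_cases hx : xj i = x
      · rw [if_pos hx]
        simp only [hx, and_true]
        have h2 : ∀ aj : ∀ j, A j,
            (if aj i = a then jointDist T μ0 Obs π Tx t s oj xpj xj aj else 0)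
            = (baseDist T μ0 Obs π Tx t s oj xpj * ∏ j, Tx j (oj j) (xpj j) (xj j)) *
                (if aj i = a then ∏ j, π j (oj j) (xj j) (aj j) else 0) := by
          intro aj
          by_cases ha : aj i = a
          · rw [if_pos ha, if_pos ha, jointDist_eq_base]; ring
          · simp [ha]
        rw [Finset.sum_congr rfl fun aj _ => h2 aj, ← Finset.mul_sum,
          sum_pi_ite (fun j => π j (oj j) (xj j)) i a (fun j => hπ_sum j (oj j) (xj j))]
        rw [hx]
      · rw [if_neg hx]
        refine Finset.sum_eq_zero fun aj _ => ?_
        rw [if_neg (by rintro ⟨-, h⟩; exact hx h)]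
    rw [Finset.sum_congr rfl fun xj _ => step1 xj]
    have step2 : ∀ xj : ∀ j, X j,
        (if xj i = x then
            baseDist T μ0 Obs π Tx t s oj xpj *
              (∏ j, Tx j (oj j) (xpj j) (xj j)) * π i (oj i) (xj i) a
          else 0)
        = (baseDist T μ0 Obs π Tx t s oj xpj * π i (oj i) x a) *
            (if xj i = x then ∏ j, Tx j (oj j) (xpj j) (xj j) else 0) := by
      intro xj
      by_cases hx : xj i = x
      · rw [if_pos hx, if_pos hx, hx]; ring
      · simp [hx]
    rw [Finset.sum_congr rfl fun xj _ => step2 xj, ← Finset.mul_sum,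
      sum_pi_ite (fun j => Tx j (oj j) (xpj j)) i x (fun j => hTx_sum j (oj j) (xpj j))]
    ring
  · rw [if_neg h, mul_zero]
    refine Finset.sum_eq_zero fun xj _ => Finset.sum_eq_zero fun aj _ => ?_
    rw [if_neg (by rintro ⟨h1, -, -, h4⟩; exact h ⟨h1, h4⟩)]
/-- The `(o, xp)`-occupancy of agent `i` (policy-independent shape). -/
noncomputable def Qocc [Fintype S] [∀ i, Fintype (A i)] [∀ i, Fintype (Ω i)]
    [∀ i, Fintype (X i)]
    (T : S → (∀ i, A i) → S → ℝ) (μ0 : S → ℝ)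
    (Obs : ∀ i, S → Option (∀ j, A j) → Ω i) (γ : ℝ)
    (π : ∀ i, Ω i → X i → A i → ℝ)
    (Tx : ∀ i, Ω i → Option (X i) → X i → ℝ)
    (i : Fin n) (o : Ω i) (xp : Option (X i)) : ℝ :=
  ∑' t : ℕ,
    γ ^ t *
      (∑ s : S, ∑ oj : (∀ j, Ω j), ∑ xpj : (∀ j, Option (X j)),
        if oj i = o ∧ xpj i = xp then baseDist T μ0 Obs π Tx t s oj xpj else 0)

lemma occAMM_factor [Fintype S] [∀ i, Fintype (A i)] [∀ i, Fintype (Ω i)]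
    [∀ i, Fintype (X i)]
    (T : S → (∀ i, A i) → S → ℝ) (μ0 : S → ℝ)
    (Obs : ∀ i, S → Option (∀ j, A j) → Ω i) (γ : ℝ)
    (π : ∀ i, Ω i → X i → A i → ℝ)
    (Tx : ∀ i, Ω i → Option (X i) → X i → ℝ)
    (hπ_sum : ∀ i o x, ∑ a : A i, π i o x a = 1)
    (hTx_sum : ∀ i o xp, ∑ x : X i, Tx i o xp x = 1)
    (i : Fin n) (o : Ω i) (a : A i) (x : X i) (xp : Option (X i)) :
    occAMM T μ0 Obs γ π Tx i o a x xp =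
      Tx i o xp x * π i o x a * Qocc T μ0 Obs γ π Tx i o xp := by
  unfold occAMM Qocc
  have h1 : ∀ t : ℕ,
      γ ^ t *
        (∑ s : S, ∑ oj : (∀ j, Ω j), ∑ xpj : (∀ j, Option (X j)), ∑ xj : (∀ j, X j),
          ∑ aj : (∀ j, A j),
            if oj i = o ∧ aj i = a ∧ xj i = x ∧ xpj i = xp
              then jointDist T μ0 Obs π Tx t s oj xpj xj aj else 0)
      = (Tx i o xp x * π i o x a) *
          (γ ^ t *
            (∑ s : S, ∑ oj : (∀ j, Ω j), ∑ xpj : (∀ j, Option (X j)),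
              if oj i = o ∧ xpj i = xp then baseDist T μ0 Obs π Tx t s oj xpj else 0)) := by
    intro t
    rw [jointDist_marginal T μ0 Obs π Tx hπ_sum hTx_sum i o a x xp t]
    ring
  rw [tsum_congr h1, tsum_mul_left]
lemma sum_sum_fac {X A : Type} [Fintype X] [Fintype A] (tx : X → ℝ) (p : X → A → ℝ)
    (q : ℝ) (htx : ∑ x, tx x = 1) (hp : ∀ x, ∑ a, p x a = 1) :
    ∑ x : X, ∑ a : A, tx x * p x a * q = q := by
  have h1 : ∀ x, ∑ a : A, tx x * p x a * q = tx x * q := by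
    intro x
    have : ∀ a, tx x * p x a * q = (tx x * q) * p x a := fun a => by ring
    rw [Finset.sum_congr rfl fun a _ => this a, ← Finset.mul_sum, hp x, mul_one]
  rw [Finset.sum_congr rfl fun x _ => h1 x, ← Finset.sum_mul, htx, one_mul]

lemma mul3_pos {a b c : ℝ} (ha : 0 ≤ a) (hb : 0 ≤ b) (h : 0 < a * b * c) :
    0 < a ∧ 0 < b ∧ 0 < c := by
  have hc : 0 < c := by
    by_contra hle
    push_neg at hle
    have := mul_nonpos_of_nonneg_of_nonpos (mul_nonneg ha hb) hle
    linarith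
  have ha' : 0 < a := by
    by_contra hle
    push_neg at hle
    have := mul_nonpos_of_nonpos_of_nonneg hle (mul_nonneg hb hc.le)
    nlinarith
  have hb' : 0 < b := by
    by_contra hle
    push_neg at hle
    have h2 : a * b ≤ 0 := mul_nonpos_of_nonneg_of_nonpos ha hle
    have := mul_nonpos_of_nonpos_of_nonneg h2 hc.le
    linarith
  exact ⟨ha', hb', hc⟩


/-- **justification of the occupancy-matching objective, Eq. 3.**
Let `f : ℝ → ℝ` satisfy `f(1) = 0` and `f(u) > 0` for `u ≠ 1`, and let the expert joint
model `N_E = (π_E, Tx_E)` have strictly positive AMM-occupancy measures `ρ_{E,i}`. For any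
joint model `N = (π, Tx)` with AMM-occupancy measures `ρ_i`, the objective
`∑_i ∑_{o,a,x,x⁻} ρ_{E,i}·f(ρ_i/ρ_{E,i})` is nonnegative; it is `0` iff `ρ_i = ρ_{E,i}`
for all `i`, which holds iff `π_i = π_{E,i}` and `Tx_i = Tx_{E,i}` for all `i`. -/
theorem occupancy_matching_objective
    {n : ℕ} {S : Type} {A : Fin n → Type} {Ω : Fin n → Type} {X : Fin n → Type}
    [Fintype S] [Nonempty S]
    [∀ i, Fintype (A i)] [∀ i, Nonempty (A i)]
    [∀ i, Fintype (Ω i)] [∀ i, Nonempty (Ω i)]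
    [∀ i, Fintype (X i)] [∀ i, Nonempty (X i)]
    (T : S → (∀ i, A i) → S → ℝ) (μ0 : S → ℝ)
    (Obs : ∀ i, S → Option (∀ j, A j) → Ω i) (γ : ℝ)
    (f : ℝ → ℝ) (hf1 : f 1 = 0) (hfpos : ∀ u : ℝ, u ≠ 1 → 0 < f u)
    (πE : ∀ i, Ω i → X i → A i → ℝ)
    (TxE : ∀ i, Ω i → Option (X i) → X i → ℝ)
    (π : ∀ i, Ω i → X i → A i → ℝ)
    (Tx : ∀ i, Ω i → Option (X i) → X i → ℝ)
    (hT_nonneg : ∀ s a s', 0 ≤ T s a s') (hT_sum : ∀ s a, ∑ s' : S, T s a s' = 1)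
    (hμ0_nonneg : ∀ s, 0 ≤ μ0 s) (hμ0_sum : ∑ s : S, μ0 s = 1)
    (hγ0 : 0 < γ) (hγ1 : γ < 1)
    (hπE_nonneg : ∀ i o x a, 0 ≤ πE i o x a)
    (hπE_sum : ∀ i o x, ∑ a : A i, πE i o x a = 1)
    (hTxE_nonneg : ∀ i o xp x, 0 ≤ TxE i o xp x)
    (hTxE_sum : ∀ i o xp, ∑ x : X i, TxE i o xp x = 1)
    (hπ_nonneg : ∀ i o x a, 0 ≤ π i o x a)
    (hπ_sum : ∀ i o x, ∑ a : A i, π i o x a = 1)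
    (hTx_nonneg : ∀ i o xp x, 0 ≤ Tx i o xp x)
    (hTx_sum : ∀ i o xp, ∑ x : X i, Tx i o xp x = 1)
    (hρE_pos : ∀ (i : Fin n) (o : Ω i) (a : A i) (x : X i) (xp : Option (X i)),
      0 < occAMM T μ0 Obs γ πE TxE i o a x xp) :
    (0 ≤ ∑ i : Fin n, ∑ o : Ω i, ∑ a : A i, ∑ x : X i, ∑ xp : Option (X i),
        occAMM T μ0 Obs γ πE TxE i o a x xp *
          f (occAMM T μ0 Obs γ π Tx i o a x xp / occAMM T μ0 Obs γ πE TxE i o a x xp)) ∧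
    ((∑ i : Fin n, ∑ o : Ω i, ∑ a : A i, ∑ x : X i, ∑ xp : Option (X i),
        occAMM T μ0 Obs γ πE TxE i o a x xp *
          f (occAMM T μ0 Obs γ π Tx i o a x xp / occAMM T μ0 Obs γ πE TxE i o a x xp))
        = 0
      ↔ (∀ (i : Fin n) (o : Ω i) (a : A i) (x : X i) (xp : Option (X i)),
          occAMM T μ0 Obs γ π Tx i o a x xp = occAMM T μ0 Obs γ πE TxE i o a x xp)) ∧
    ((∀ (i : Fin n) (o : Ω i) (a : A i) (x : X i) (xp : Option (X i)),
        occAMM T μ0 Obs γ π Tx i o a x xp = occAMM T μ0 Obs γ πE TxE i o a x xp)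
      ↔ (∀ i : Fin n, π i = πE i ∧ Tx i = TxE i)) := by

  have hf_nonneg : ∀ u : ℝ, 0 ≤ f u := by
    intro u
    by_cases hu : u = 1
    · rw [hu, hf1]
    · exact (hfpos u hu).le
  have hterm : ∀ (i : Fin n) (o : Ω i) (a : A i) (x : X i) (xp : Option (X i)),
      0 ≤ occAMM T μ0 Obs γ πE TxE i o a x xp *
        f (occAMM T μ0 Obs γ π Tx i o a x xp / occAMM T μ0 Obs γ πE TxE i o a x xp) :=
    fun i o a x xp => mul_nonneg (hρE_pos i o a x xp).le (hf_nonneg _)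
  refine ⟨?_, ?_, ?_⟩
  · exact Finset.sum_nonneg fun i _ => Finset.sum_nonneg fun o _ =>
      Finset.sum_nonneg fun a _ => Finset.sum_nonneg fun x _ =>
        Finset.sum_nonneg fun xp _ => hterm i o a x xp
  · constructor
    · intro hz i o a x xp
      have h1 := (Finset.sum_eq_zero_iff_of_nonneg fun i _ =>
        Finset.sum_nonneg fun o _ => Finset.sum_nonneg fun a _ =>
          Finset.sum_nonneg fun x _ => Finset.sum_nonneg fun xp _ =>
            hterm i o a x xp).mp hz i (Finset.mem_univ i)
      have h2 := (Finset.sum_eq_zero_iff_of_nonneg fun o _ =>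
        Finset.sum_nonneg fun a _ => Finset.sum_nonneg fun x _ =>
          Finset.sum_nonneg fun xp _ => hterm i o a x xp).mp h1 o (Finset.mem_univ o)
      have h3 := (Finset.sum_eq_zero_iff_of_nonneg fun a _ =>
        Finset.sum_nonneg fun x _ => Finset.sum_nonneg fun xp _ =>
          hterm i o a x xp).mp h2 a (Finset.mem_univ a)
      have h4 := (Finset.sum_eq_zero_iff_of_nonneg fun x _ =>
        Finset.sum_nonneg fun xp _ => hterm i o a x xp).mp h3 x (Finset.mem_univ x)
      have h5 := (Finset.sum_eq_zero_iff_of_nonneg fun xp _ =>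
        hterm i o a x xp).mp h4 xp (Finset.mem_univ xp)
      have hfz : f (occAMM T μ0 Obs γ π Tx i o a x xp /
          occAMM T μ0 Obs γ πE TxE i o a x xp) = 0 := by
        rcases mul_eq_zero.mp h5 with h | h
        · exact absurd h (hρE_pos i o a x xp).ne'
        · exact h
      have hdiv : occAMM T μ0 Obs γ π Tx i o a x xp /
          occAMM T μ0 Obs γ πE TxE i o a x xp = 1 := by
        by_contra hne
        exact (hfpos _ hne).ne' hfz
      exact (div_eq_one_iff_eq (hρE_pos i o a x xp).ne').mp hdiv
    · intro heq
      refine Finset.sum_eq_zero fun i _ => Finset.sum_eq_zero fun o _ =>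
        Finset.sum_eq_zero fun a _ => Finset.sum_eq_zero fun x _ =>
          Finset.sum_eq_zero fun xp _ => ?_
      rw [heq i o a x xp, div_self (hρE_pos i o a x xp).ne', hf1, mul_zero]
  · constructor
    · intro h i
      have key : ∀ (o : Ω i) (a : A i) (x : X i) (xp : Option (X i)),
          Tx i o xp x * π i o x a * Qocc T μ0 Obs γ π Tx i o xp =
          TxE i o xp x * πE i o x a * Qocc T μ0 Obs γ πE TxE i o xp := by
        intro o a x xp
        rw [← occAMM_factor T μ0 Obs γ π Tx hπ_sum hTx_sum,
          ← occAMM_factor T μ0 Obs γ πE TxE hπE_sum hTxE_sum]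
        exact h i o a x xp
      have hfacE : ∀ (o : Ω i) (a : A i) (x : X i) (xp : Option (X i)),
          0 < TxE i o xp x * πE i o x a * Qocc T μ0 Obs γ πE TxE i o xp := by
        intro o a x xp
        rw [← occAMM_factor T μ0 Obs γ πE TxE hπE_sum hTxE_sum]
        exact hρE_pos i o a x xp
      have hpos : ∀ (o : Ω i) (a : A i) (x : X i) (xp : Option (X i)),
          0 < TxE i o xp x ∧ 0 < πE i o x a ∧ 0 < Qocc T μ0 Obs γ πE TxE i o xp :=
        fun o a x xp => mul3_pos (hTxE_nonneg i o xp x) (hπE_nonneg i o x a)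
          (hfacE o a x xp)
      have hQ : ∀ (o : Ω i) (xp : Option (X i)),
          Qocc T μ0 Obs γ π Tx i o xp = Qocc T μ0 Obs γ πE TxE i o xp := by
        intro o xp
        calc Qocc T μ0 Obs γ π Tx i o xp
            = ∑ x : X i, ∑ a : A i, Tx i o xp x * π i o x a *
                Qocc T μ0 Obs γ π Tx i o xp :=
              (sum_sum_fac _ _ _ (hTx_sum i o xp) (fun x => hπ_sum i o x)).symm
          _ = ∑ x : X i, ∑ a : A i, TxE i o xp x * πE i o x a *
                Qocc T μ0 Obs γ πE TxE i o xp :=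
              Finset.sum_congr rfl fun x _ => Finset.sum_congr rfl fun a _ =>
                key o a x xp
          _ = Qocc T μ0 Obs γ πE TxE i o xp :=
              sum_sum_fac _ _ _ (hTxE_sum i o xp) (fun x => hπE_sum i o x)
      have key2 : ∀ (o : Ω i) (a : A i) (x : X i) (xp : Option (X i)),
          Tx i o xp x * π i o x a = TxE i o xp x * πE i o x a := by
        intro o a x xp
        have k := key o a x xp
        rw [hQ o xp] at k
        exact mul_right_cancel₀ (hpos o a x xp).2.2.ne' k
      have hTx' : ∀ (o : Ω i) (xp : Option (X i)) (x : X i),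
          Tx i o xp x = TxE i o xp x := by
        intro o xp x
        calc Tx i o xp x = ∑ a : A i, Tx i o xp x * π i o x a := by
              rw [← Finset.mul_sum, hπ_sum, mul_one]
          _ = ∑ a : A i, TxE i o xp x * πE i o x a :=
              Finset.sum_congr rfl fun a _ => key2 o a x xp
          _ = TxE i o xp x := by rw [← Finset.mul_sum, hπE_sum, mul_one]
      have hπ' : ∀ (o : Ω i) (x : X i) (a : A i), π i o x a = πE i o x a := by
        intro o x a
        have k := key2 o a x none
        rw [hTx' o none x] at k
        exact mul_left_cancel₀ (hpos o a x none).1.ne' k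
      exact ⟨funext fun o => funext fun x => funext fun a => hπ' o x a,
        funext fun o => funext fun xp => funext fun x => hTx' o xp x⟩
    · intro h i o a x xp
      have hπeq : π = πE := funext fun i => (h i).1
      have hTxeq : Tx = TxE := funext fun i => (h i).2
      rw [hπeq, hTxeq]

end DecPOMDP
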